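/- For t ∈ (0,1), let E(r) = 1 + r + ((1+t)(1−r²) − (r−t))/(1−tr) for r ∈ [0,1). Then E attains its maximum on [0,1) at r₀ = (1−√(1−t²))/t, the maximum value is N_t = (2 − 2√(1−t²) + t(4 + t − 4√(1−t²)))/t², and N_t → 7 as t → 1⁻. -/

import Mathlib

open Set Filter

/-- `E(r) = 1 + r + ((1+t)(1−r²) − (r−t))/(1−tr)`. -/
noncomputable def Efun (t r : ℝ) : ℝ := 1 + r + ((1 + t) * (1 - r ^ 2) - (r - t)) / (1 - t * r)

/-- `r₀ = (1 − √(1−t²))/t`. -/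
noncomputable def rzero (t : ℝ) : ℝ := (1 - Real.sqrt (1 - t ^ 2)) / t

/-- `N_t = (2 − 2√(1−t²) + t(4 + t − 4√(1−t²)))/t²`. -/
noncomputable def Nt (t : ℝ) : ℝ :=
  (2 - 2 * Real.sqrt (1 - t ^ 2) + t * (4 + t - 4 * Real.sqrt (1 - t ^ 2))) / t ^ 2

/-- For `t ∈ (0,1)`, `E` attains its maximum on `[0,1)` at `r₀ = (1−√(1−t²))/t`, the
maximum value is `N_t`, and `N_t → 7` as `t → 1⁻`. -/
theorem Efun_max_and_limit :
    (∀ t ∈ Set.Ioo (0 : ℝ) 1,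
        rzero t ∈ Set.Ico (0 : ℝ) 1 ∧
        (∀ r ∈ Set.Ico (0 : ℝ) 1, Efun t r ≤ Efun t (rzero t)) ∧
        Efun t (rzero t) = Nt t) ∧
      Tendsto Nt (nhdsWithin 1 (Set.Iio 1)) (nhds 7) := by
  constructor
  · rintro t ⟨ht0, ht1⟩
    set s := Real.sqrt (1 - t ^ 2) with hs
    have h1t2 : (0 : ℝ) < 1 - t ^ 2 := by nlinarith
    have hs2 : s ^ 2 = 1 - t ^ 2 := Real.sq_sqrt h1t2.le
    have hs0 : 0 < s := Real.sqrt_pos.2 h1t2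
    have hs1 : s < 1 := by nlinarith
    have hst : 1 - t < s := by nlinarith
    have hr0 : rzero t ∈ Set.Ico (0 : ℝ) 1 := by
      constructor
      · exact div_nonneg (by linarith) ht0.le
      · rw [rzero, div_lt_one ht0]; linarith
    refine ⟨hr0, ?_, ?_⟩
    · rintro r ⟨hr0', hr1⟩
      have htr : 0 < 1 - t * r := by nlinarith
      have key : Efun t (rzero t) - Efun t r
          = (1 + 2 * t) * (r - (1 - s) / t) ^ 2 / (1 - t * r) := by
        rw [Efun, Efun, rzero, ← hs]
        have hden : 1 - t * ((1 - s) / t) = s := by field_simp; ring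
        rw [hden]
        field_simp
        linear_combination (-(1 + 2*t)*s + 1 + 2*t - t*r
          - 2*t^2*r) * hs2
      nlinarith [key, sq_nonneg (r - (1 - s) / t), div_nonneg
        (mul_nonneg (by linarith : (0:ℝ) ≤ 1 + 2 * t)
          (sq_nonneg (r - (1 - s) / t))) htr.le]
    · rw [Efun, rzero, Nt, ← hs]
      have hden : 1 - t * ((1 - s) / t) = s := by field_simp; ring
      rw [hden]
      field_simp
      linear_combination (1 + 2*t) * hs2
  · have hc : ContinuousAt Nt 1 := by
      apply ContinuousAt.div
      · fun_prop
      · fun_prop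
      · norm_num
    have h7 : Nt 1 = 7 := by
      norm_num [Nt]
    have := hc.continuousWithinAt (s := Set.Iio 1)
    rwa [ContinuousWithinAt, h7] at this
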